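/- Let p and q be coprime positive integers and set m = p/q. Let b and b' be real numbers such that mi + b ∉ ℤ and mi + b' ∉ ℤ for every integer i (i.e. the lines y = mx + b and y = mx + b' avoid all integer lattice points). Then there exists an integer s such that for every integer k, ⌊m + {b' + (k-1)m}⌋ = ⌊m + {b + (k+s-1)m}⌋. In other words, viewed as a periodic word up to cyclic shift, the Sturmian sequence associated to the rational rotation number m is independent of the choice of intercept. -/

import Mathlib

private lemma aux_floor (q : ℕ) (hq : 0 < q) (n : ℤ) (e : ℝ) (he0 : 0 ≤ e)
    (he1 : e < 1 / q) : ⌊(n : ℝ) / q + e⌋ = n / q := by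
  have hq' : (0:ℝ) < q := by exact_mod_cast hq
  have hqz : (q:ℤ) ≠ 0 := by exact_mod_cast hq.ne'
  have hmod0 : (0:ℤ) ≤ n % q := Int.emod_nonneg n hqz
  have hmodq : n % q < q := Int.emod_lt_of_pos n (by exact_mod_cast hq)
  have hdec : (q:ℤ) * (n / q) + n % q = n := Int.mul_ediv_add_emod n q
  set A : ℝ := ((n / (q:ℤ) : ℤ) : ℝ) with hA
  set B : ℝ := ((n % (q:ℤ) : ℤ) : ℝ) with hB
  have hdecR : (n:ℝ) = q * A + B := by rw [hA, hB]; exact_mod_cast hdec.symm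
  have hB0 : (0:ℝ) ≤ B := by rw [hB]; exact_mod_cast hmod0
  have hB1 : B ≤ (q:ℝ) - 1 := by
    have : n % q ≤ (q:ℤ) - 1 := by omega
    rw [hB]; exact_mod_cast this
  have he1' : e * q < 1 := by
    rw [lt_div_iff₀ hq'] at he1; linarith
  have key : (n:ℝ)/q = A + B/q := by rw [hdecR]; field_simp
  rw [Int.floor_eq_iff, key]
  constructor
  · have : 0 ≤ B / q := div_nonneg hB0 hq'.le
    linarith
  · have h1 : B / q + e = (B + e * q) / q := by field_simp
    have h2 : (B + e * q) / q < 1 := by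
      rw [div_lt_one hq']; nlinarith
    push_cast
    linarith [h1 ▸ h2]

private lemma aux_fract (q : ℕ) (hq : 0 < q) (n : ℤ) (e : ℝ) (he0 : 0 ≤ e)
    (he1 : e < 1 / q) :
    Int.fract ((n : ℝ) / q + e) = ((n % (q:ℤ) : ℤ) : ℝ) / q + e := by
  have hq' : (0:ℝ) < q := by exact_mod_cast hq
  have hdec : (q:ℤ) * (n / q) + n % q = n := Int.mul_ediv_add_emod n q
  have hdecR : (n:ℝ) = q * ((n / (q:ℤ) : ℤ) : ℝ) + ((n % (q:ℤ) : ℤ) : ℝ) := by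
    exact_mod_cast hdec.symm
  rw [Int.fract, aux_floor q hq n e he0 he1]
  rw [hdecR]
  field_simp
  ring

/-- The value of `⌊p/q + fract (b + k·(p/q))⌋` depends only on `(⌊b·q⌋ + k·p) % q`. -/
private lemma aux_value (p q : ℕ) (hq : 0 < q) (b : ℝ) (k : ℤ) :
    ⌊(p:ℝ)/q + Int.fract (b + (k:ℝ) * ((p:ℝ)/q))⌋
      = ((p:ℤ) + (⌊b * q⌋ + k * p) % q) / q := by
  have hq' : (0:ℝ) < q := by exact_mod_cast hq
  set e : ℝ := Int.fract (b * q) / q with he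
  have he0 : 0 ≤ e := div_nonneg (Int.fract_nonneg _) hq'.le
  have he1 : e < 1 / q := by
    rw [he, div_lt_div_iff₀ hq' hq']
    nlinarith [Int.fract_lt_one (b * q)]
  set n : ℤ := ⌊b * q⌋ + k * p with hn
  have hfr : Int.fract (b * q) = b * q - ⌊b * q⌋ := rfl
  have hexpr : b + (k:ℝ) * ((p:ℝ)/q) = (n : ℝ) / q + e := by
    rw [he, hn]
    push_cast
    field_simp
    linarith [hfr]
  rw [hexpr, aux_fract q hq n e he0 he1]
  have hexpr2 : (p:ℝ)/q + (((n % (q:ℤ) : ℤ) : ℝ) / q + e)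
      = (((p:ℤ) + n % (q:ℤ) : ℤ) : ℝ) / q + e := by
    push_cast
    ring
  rw [hexpr2, aux_floor q hq _ e he0 he1]

theorem sturmian_word_independent_of_intercept (p q : ℕ) (hp : 0 < p) (hq : 0 < q)
    (hpq : Nat.Coprime p q) (m : ℝ) (hm : m = (p : ℝ) / (q : ℝ)) (b b' : ℝ)
    (hb : ∀ i : ℤ, ∀ z : ℤ, m * (i : ℝ) + b ≠ (z : ℝ))
    (hb' : ∀ i : ℤ, ∀ z : ℤ, m * (i : ℝ) + b' ≠ (z : ℝ)) :
    ∃ s : ℤ, ∀ k : ℤ,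
      ⌊m + Int.fract (b' + ((k : ℝ) - 1) * m)⌋
        = ⌊m + Int.fract (b + ((k : ℝ) + (s : ℝ) - 1) * m)⌋ := by
  -- get a Bézout relation
  have hcop : IsCoprime (p : ℤ) (q : ℤ) := by
    rw [Int.isCoprime_iff_gcd_eq_one]
    exact_mod_cast hpq
  obtain ⟨u, v, huv⟩ := hcop
  set d : ℤ := ⌊b' * q⌋ - ⌊b * q⌋ with hd
  refine ⟨d * u, fun k => ?_⟩
  have h1 : b' + ((k:ℝ) - 1) * m = b' + ((k - 1 : ℤ) : ℝ) * m := by push_cast; ring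
  have h2 : b + ((k:ℝ) + ((d * u : ℤ):ℝ) - 1) * m
      = b + ((k + d * u - 1 : ℤ) : ℝ) * m := by push_cast; ring
  rw [h1, h2, hm, aux_value p q hq b' (k - 1), aux_value p q hq b (k + d * u - 1)]
  congr 1
  have hmodeq : (⌊b' * q⌋ + (k - 1) * (p:ℤ)) % q = (⌊b * q⌋ + (k + d * u - 1) * (p:ℤ)) % q := by
    have hdvd : (q:ℤ) ∣ (⌊b * q⌋ + (k + d * u - 1) * (p:ℤ)) - (⌊b' * q⌋ + (k - 1) * (p:ℤ)) := by
      have : (⌊b * q⌋ + (k + d * u - 1) * (p:ℤ)) - (⌊b' * q⌋ + (k - 1) * (p:ℤ))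
          = -d * (v * q) := by
        have : d * (u * p) = d * (1 - v * q) := by rw [← huv]; ring
        linear_combination this
      rw [this]
      exact ⟨-d * v, by ring⟩
    exact Int.modEq_iff_dvd.mpr hdvd
  rw [hmodeq]
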